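/- arXiv:2008.06418 — 4 statements merged into one kernel-verified Lean document; each statement's English description precedes it below -/
import Mathlib

section
/- Closed-form resolution of the ABHY constraints (planar-basis expansion): let V be a real vector space with quadratic form Q, let i, j be integers with 3 ≤ i and i + 2 ≤ j, and let p₂, p₃, …, p_{j−1} ∈ V all be null. Then Q(∑_{a=i}^{j−1} p_a) = Q(∑_{a=2}^{j−1} p_a) − Q(∑_{a=2}^{i} p_a) − ∑_{a=2}^{i−1} ∑_{b=i+1}^{j−1} Q(p_a + p_b). In planar-variable notation: X_{i,j} = X_{2,j} − X_{2,i+1} + ∑_{a=2}^{i−1} ∑_{b=i+1}^{j−1} c_{a,b}, where c_{a,b} = −Q(p_a + p_b), expressing every planar variable in the basis {X_{2,i}} used for the bi-adjoint recursion. -/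
/-- Closed-form resolution of the ABHY constraints: for `3 ≤ i` and `i + 2 ≤ j`,
with `p 2, …, p (j-1)` null,
`Q(∑_{a=i}^{j-1} p a) = Q(∑_{a=2}^{j-1} p a) − Q(∑_{a=2}^{i} p a)
  − ∑_{a=2}^{i-1} ∑_{b=i+1}^{j-1} Q(p a + p b)`. -/
theorem abhy_closed_form (V : Type*) [AddCommGroup V] [Module ℝ V]
    (Q : QuadraticForm ℝ V) (i j : ℕ) (hi : 3 ≤ i) (hj : i + 2 ≤ j)
    (p : ℕ → V) (hnull : ∀ a ∈ Finset.Icc 2 (j - 1), Q (p a) = 0) :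
    Q (∑ a ∈ Finset.Icc i (j - 1), p a)
      = Q (∑ a ∈ Finset.Icc 2 (j - 1), p a) - Q (∑ a ∈ Finset.Icc 2 i, p a)
        - ∑ a ∈ Finset.Icc 2 (i - 1), ∑ b ∈ Finset.Icc (i + 1) (j - 1), Q (p a + p b) := by
  classical
  -- the key splitting lemma
  have key : ∀ (s t : Finset ℕ), Disjoint s t →
      Q (∑ a ∈ s ∪ t, p a) = Q (∑ a ∈ s, p a) + Q (∑ a ∈ t, p a)
        + ∑ a ∈ s, ∑ b ∈ t, QuadraticMap.polar Q (p a) (p b) := by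
    intro s t hst
    rw [Finset.sum_union hst]
    have h1 : Q (∑ a ∈ s, p a + ∑ b ∈ t, p b)
        = Q (∑ a ∈ s, p a) + Q (∑ b ∈ t, p b)
          + QuadraticMap.polar Q (∑ a ∈ s, p a) (∑ b ∈ t, p b) := by
      simp [QuadraticMap.polar]
    rw [h1]
    congr 1
    rw [← QuadraticMap.polarBilin_apply_apply]
    simp only [map_sum, LinearMap.sum_apply, QuadraticMap.polarBilin_apply_apply]
    exact Finset.sum_comm
  set A := Finset.Icc 2 (i - 1) with hA
  set C := Finset.Icc (i + 1) (j - 1) with hC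
  have hD : Finset.Icc i (j - 1) = {i} ∪ C := by
    ext x; simp only [hC, Finset.mem_Icc, Finset.mem_union, Finset.mem_singleton]; omega
  have hdiC : Disjoint ({i} : Finset ℕ) C := by
    simp only [hC, Finset.disjoint_singleton_left, Finset.mem_Icc]; omega
  have h2j : Finset.Icc 2 (j - 1) = A ∪ Finset.Icc i (j - 1) := by
    ext x; simp only [hA, Finset.mem_Icc, Finset.mem_union]; omega
  have hdiA : Disjoint A (Finset.Icc i (j - 1)) := by
    rw [Finset.disjoint_left]; intro x hx hx'
    simp only [hA, Finset.mem_Icc] at hx hx'; omega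
  have h2i : Finset.Icc 2 i = A ∪ {i} := by
    ext x; simp only [hA, Finset.mem_Icc, Finset.mem_union, Finset.mem_singleton]; omega
  have hdiAi : Disjoint A ({i} : Finset ℕ) := by
    simp only [hA, Finset.disjoint_singleton_right, Finset.mem_Icc]; omega
  have hQi : Q (p i) = 0 := hnull i (by simp only [Finset.mem_Icc]; omega)
  -- rewrite Q (p a + p b) as polar
  have hpair : ∀ a ∈ A, ∀ b ∈ C, Q (p a + p b) = QuadraticMap.polar Q (p a) (p b) := by
    intro a ha b hb
    simp only [hA, Finset.mem_Icc] at ha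
    simp only [hC, Finset.mem_Icc] at hb
    have hqa : Q (p a) = 0 := hnull a (by simp only [Finset.mem_Icc]; omega)
    have hqb : Q (p b) = 0 := hnull b (by simp only [Finset.mem_Icc]; omega)
    simp [QuadraticMap.polar, hqa, hqb]
  rw [h2j, key A _ hdiA, h2i, key A {i} hdiAi, hD, key {i} C hdiC,
    Finset.sum_singleton, hQi,
    Finset.sum_congr rfl (fun a ha => Finset.sum_congr rfl (fun b hb => hpair a ha b hb))]
  have hsplit : ∀ a ∈ A, ∑ d ∈ {i} ∪ C, QuadraticMap.polar Q (p a) (p d)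
      = QuadraticMap.polar Q (p a) (p i) + ∑ b ∈ C, QuadraticMap.polar Q (p a) (p b) := by
    intro a _
    rw [Finset.sum_union hdiC, Finset.sum_singleton]
  rw [Finset.sum_congr rfl hsplit, Finset.sum_add_distrib]
  simp only [Finset.sum_singleton]
  ring
end

section
/- First adjacent-pair basis identity (Appendix C, eq. (C.2), first line): let V be a real vector space with quadratic form Q, let i, m be integers with 2 ≤ i < m, and let p₃, p₄, …, p_{2m} ∈ V all be null. Then Q(∑_{a=2i−1}^{2m} p_a) = −Q(∑_{a=3}^{2i} p_a) + Q(∑_{a=3}^{2m} p_a) + Q(p_{2i−1} + p_{2i}) + (2i−4)·∑_{k=i+1}^{m} Q(p_{2k−1} + p_{2k}) − ∑_{j=3}^{2i−2} ∑_{k=i+1}^{m} Q(p_j + p_{2k−1} + p_{2k}). In planar-variable notation: X_{2i−1,2m+1} = −X_{3,2i+1} + X_{3,2m+1} + X_{2i−1,2i+1} + (2i−4)∑_{k=i+1}^{m} X_{2k−1,2k+1} + ∑_{j=3}^{2i−2}∑_{k=i+1}^{m} c_{j,2k−1,2k}. -/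
open Finset QuadraticMap

private lemma pair_reindex {V : Type*} [AddCommGroup V] (p : ℕ → V) :
    ∀ m i, i ≤ m → ∑ a ∈ Finset.Ioc (2*i) (2*m), p a
      = ∑ k ∈ Finset.Ioc i m, (p (2*k-1) + p (2*k)) := by
  intro m
  induction m with
  | zero => intro i hi; interval_cases i; simp
  | succ n ih =>
    intro i hi
    rcases eq_or_lt_of_le hi with h | h
    · subst h; simp
    · have hin : i ≤ n := by omega
      have h1 : (∑ a ∈ Finset.Ioc (2*i) (2*n), p a)
            + ∑ a ∈ Finset.Ioc (2*n) (2*(n+1)), p a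
          = ∑ a ∈ Finset.Ioc (2*i) (2*(n+1)), p a :=
        Finset.sum_Ioc_consecutive _ (by omega) (by omega)
      have h2 : (∑ k ∈ Finset.Ioc i n, (p (2*k-1) + p (2*k)))
            + ∑ k ∈ Finset.Ioc n (n+1), (p (2*k-1) + p (2*k))
          = ∑ k ∈ Finset.Ioc i (n+1), (p (2*k-1) + p (2*k)) :=
        Finset.sum_Ioc_consecutive _ (by omega) (by omega)
      have e1 : Finset.Ioc (2*n) (2*(n+1)) = {2*n+1, 2*n+2} := by
        ext x; simp [Finset.mem_Ioc]; omega
      have e2 : Finset.Ioc n (n+1) = {n+1} := by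
        ext x
        simp only [Finset.mem_Ioc, Finset.mem_singleton]
        omega
      have e3 : 2*(n+1)-1 = 2*n+1 := by omega
      have e4 : 2*(n+1) = 2*n+2 := by omega
      rw [← h1, ← h2, ih i hin, e1, e2, Finset.sum_pair (by omega),
        Finset.sum_singleton, e3, e4]

/-- First adjacent-pair basis identity (Appendix C, eq. (C.2), first line):
for `2 ≤ i < m` and `p 3, …, p (2m)` null,
`Q(∑_{a=2i-1}^{2m} p a) = −Q(∑_{a=3}^{2i} p a) + Q(∑_{a=3}^{2m} p a)
  + Q(p_{2i-1} + p_{2i}) + (2i−4)·∑_{k=i+1}^{m} Q(p_{2k-1} + p_{2k})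
  − ∑_{j=3}^{2i-2} ∑_{k=i+1}^{m} Q(p_j + p_{2k-1} + p_{2k})`. -/
theorem adjacent_pair_basis_first (V : Type*) [AddCommGroup V] [Module ℝ V]
    (Q : QuadraticForm ℝ V) (i m : ℕ) (hi : 2 ≤ i) (him : i < m)
    (p : ℕ → V) (hnull : ∀ a ∈ Finset.Icc 3 (2 * m), Q (p a) = 0) :
    Q (∑ a ∈ Finset.Icc (2 * i - 1) (2 * m), p a)
      = -Q (∑ a ∈ Finset.Icc 3 (2 * i), p a) + Q (∑ a ∈ Finset.Icc 3 (2 * m), p a)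
        + Q (p (2 * i - 1) + p (2 * i))
        + (2 * (i : ℝ) - 4) * ∑ k ∈ Finset.Icc (i + 1) m, Q (p (2 * k - 1) + p (2 * k))
        - ∑ j ∈ Finset.Icc 3 (2 * i - 2), ∑ k ∈ Finset.Icc (i + 1) m,
            Q (p j + p (2 * k - 1) + p (2 * k)) := by
  set A : V := ∑ a ∈ Finset.Icc 3 (2*i-2), p a with hAdef
  set C : V := p (2*i-1) + p (2*i) with hCdef
  set D : V := ∑ a ∈ Finset.Ioc (2*i) (2*m), p a with hDdef
  -- index set conversions
  have icc_ioc : ∀ x : ℕ, Finset.Icc 3 x = Finset.Ioc 2 x := by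
    intro x; ext a; simp [Finset.mem_Icc, Finset.mem_Ioc]; omega
  have eAC : Finset.Ioc (2*i-2) (2*i) = {2*i-1, 2*i} := by
    ext x; simp [Finset.mem_Ioc]; omega
  have hCsum : ∑ a ∈ Finset.Ioc (2*i-2) (2*i), p a = C := by
    rw [eAC, Finset.sum_pair (by omega)]
  have hA2 : Finset.Icc 3 (2*i-2) = Finset.Ioc 2 (2*i-2) := icc_ioc _
  -- split sums
  have hAC : ∑ a ∈ Finset.Icc 3 (2*i), p a = A + C := by
    rw [icc_ioc, hAdef, hA2, ← hCsum]
    exact (Finset.sum_Ioc_consecutive _ (by omega) (by omega)).symm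
  have hACD : ∑ a ∈ Finset.Icc 3 (2*m), p a = A + C + D := by
    rw [icc_ioc, ← hAC, icc_ioc]
    exact (Finset.sum_Ioc_consecutive _ (by omega) (by omega)).symm
  have hCD : ∑ a ∈ Finset.Icc (2*i-1) (2*m), p a = C + D := by
    have : Finset.Icc (2*i-1) (2*m) = Finset.Ioc (2*i-2) (2*m) := by
      ext x; simp [Finset.mem_Icc, Finset.mem_Ioc]; omega
    rw [this, ← hCsum]
    exact (Finset.sum_Ioc_consecutive _ (by omega) (by omega)).symm
  have hIoc : Finset.Icc (i+1) m = Finset.Ioc i m := by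
    ext x; simp [Finset.mem_Icc, Finset.mem_Ioc]
  have hD : D = ∑ k ∈ Finset.Icc (i+1) m, (p (2*k-1) + p (2*k)) := by
    rw [hIoc, hDdef]; exact pair_reindex p m i (le_of_lt him)
  -- polar expansion facts
  have hpolar : ∀ x y : V, Q (x + y) = Q x + Q y + polar Q x y := by
    intro x y; simp [QuadraticMap.polar]
  set S : ℝ := ∑ k ∈ Finset.Icc (i+1) m, Q (p (2*k-1) + p (2*k)) with hSdef
  -- inner double sum
  have hinner : ∑ j ∈ Finset.Icc 3 (2*i-2), ∑ k ∈ Finset.Icc (i+1) m,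
        Q (p j + p (2*k-1) + p (2*k))
      = (2*(i:ℝ) - 4) * S + polar Q A D := by
    have step1 : ∀ j ∈ Finset.Icc 3 (2*i-2),
        ∑ k ∈ Finset.Icc (i+1) m, Q (p j + p (2*k-1) + p (2*k))
          = S + polar Q (p j) D := by
      intro j hj
      have hjn : Q (p j) = 0 := hnull j (by rw [Finset.mem_Icc] at hj ⊢; omega)
      have : ∀ k ∈ Finset.Icc (i+1) m, Q (p j + p (2*k-1) + p (2*k))
          = Q (p (2*k-1) + p (2*k)) + polar Q (p j) (p (2*k-1) + p (2*k)) := by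
        intro k _
        rw [add_assoc, hpolar, hjn]; ring
      rw [Finset.sum_congr rfl this, Finset.sum_add_distrib, ← hSdef]
      congr 1
      rw [hD, ← polarBilin_apply_apply, _root_.map_sum]
      simp [polarBilin_apply_apply]
    rw [Finset.sum_congr rfl step1, Finset.sum_add_distrib, Finset.sum_const]
    have hcard : (Finset.Icc 3 (2*i-2)).card = 2*i-4 := by
      rw [Nat.card_Icc]; omega
    have hpsum : ∑ j ∈ Finset.Icc 3 (2*i-2), polar Q (p j) D = polar Q A D := by
      simp_rw [← polarBilin_apply_apply]
      rw [← LinearMap.sum_apply, ← _root_.map_sum]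
    rw [hpsum, hcard, nsmul_eq_mul]
    congr 2
    push_cast [Nat.cast_sub (by omega : 4 ≤ 2*i)]
    ring
  have h2i1 : 2*i - 1 ≤ 2*m := by omega
  have hsplit : polar (⇑Q) (A + C) D = polar (⇑Q) A D + polar (⇑Q) C D :=
    polar_add_left Q A C D
  rw [hCD, hAC, hACD, hinner, hpolar C D, hpolar (A+C) D, hsplit]
  ring
end

section
/- Second adjacent-pair basis identity (Appendix C, eq. (C.2), second line): let V be a real vector space with quadratic form Q, let i, m be integers with 2 ≤ i < m, and let p₃, p₄, …, p_{2m} ∈ V all be null. Then Q(∑_{a=2i−1}^{2m−1} p_a) = −Q(∑_{a=3}^{2i} p_a) + Q(∑_{a=3}^{2m} p_a) + 2·Q(p_{2i−1} + p_{2i}) + (2i−5)·Q(p_{2m−1} + p_{2m}) + (2i−3)·∑_{k=i+1}^{m−1} Q(p_{2k−1} + p_{2k}) − ∑_{j=3}^{2i−2} ∑_{k=i+1}^{m} Q(p_j + p_{2k−1} + p_{2k}) − ∑_{k=i}^{m−1} Q(p_{2k−1} + p_{2k} + p_{2m}). In planar-variable notation: X_{2i−1,2m} = −X_{3,2i+1}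 + X_{3,2m+1} + 2X_{2i−1,2i+1} + (2i−5)X_{2m−1,2m+1} + (2i−3)∑_{k=i+1}^{m−1} X_{2k−1,2k+1} + ∑_{j=3}^{2i−2}∑_{k=i+1}^{m} c_{j,2k−1,2k} + ∑_{k=i}^{m−1} c_{2k−1,2k,2m}. -/
open Finset QuadraticMap

private lemma polar_sum_left' {V : Type*} [AddCommGroup V] [Module ℝ V]
    (Q : QuadraticForm ℝ V) (s : Finset ℕ) (g : ℕ → V) (y : V) :
    polar Q (∑ a ∈ s, g a) y = ∑ a ∈ s, polar Q (g a) y := by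
  classical
  induction s using Finset.cons_induction with
  | empty => simp [QuadraticMap.polar_zero_left]
  | cons a s ha ih => rw [Finset.sum_cons, QuadraticMap.polar_add_left, ih, Finset.sum_cons]

private lemma polar_sum_right' {V : Type*} [AddCommGroup V] [Module ℝ V]
    (Q : QuadraticForm ℝ V) (s : Finset ℕ) (g : ℕ → V) (y : V) :
    polar Q y (∑ a ∈ s, g a) = ∑ a ∈ s, polar Q y (g a) := by
  rw [QuadraticMap.polar_comm, polar_sum_left']
  exact Finset.sum_congr rfl fun a _ => QuadraticMap.polar_comm _ _ _

private lemma pairSum (g : ℕ → ℝ) (i : ℕ) (hi : 1 ≤ i) : ∀ m, i ≤ m →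
    ∑ a ∈ Finset.Icc (2*i-1) (2*m), g a
      = ∑ k ∈ Finset.Icc i m, (g (2*k-1) + g (2*k)) := by
  intro m hm
  induction m, hm using Nat.le_induction with
  | base =>
      rw [show Finset.Icc (2*i-1) (2*i) = {2*i-1, 2*i} from by ext a; simp; omega,
        Finset.sum_pair (by omega), Finset.Icc_self, Finset.sum_singleton]
  | succ n hn ih =>
      rw [show Finset.Icc (2*i-1) (2*(n+1)) = Finset.Icc (2*i-1) (2*n) ∪ {2*n+1, 2*n+2} from by
          ext a; simp; omega,
        Finset.sum_union (by rw [Finset.disjoint_left]; intro a ha hb; simp at ha hb; omega),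
        ih, Finset.sum_pair (by omega),
        show Finset.Icc i (n+1) = insert (n+1) (Finset.Icc i n) from by ext a; simp; omega,
        Finset.sum_insert (by simp), show 2*(n+1)-1 = 2*n+1 by omega,
        show 2*(n+1) = 2*n+2 by omega]
      ring

/-- Second adjacent-pair basis identity (Appendix C, eq. (C.2), second line):
for `2 ≤ i < m` and `p 3, …, p (2m)` null,
`Q(∑_{a=2i-1}^{2m-1} p a) = −Q(∑_{a=3}^{2i} p a) + Q(∑_{a=3}^{2m} p a)
  + 2·Q(p_{2i-1} + p_{2i}) + (2i−5)·Q(p_{2m-1} + p_{2m})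
  + (2i−3)·∑_{k=i+1}^{m-1} Q(p_{2k-1} + p_{2k})
  − ∑_{j=3}^{2i-2} ∑_{k=i+1}^{m} Q(p_j + p_{2k-1} + p_{2k})
  − ∑_{k=i}^{m-1} Q(p_{2k-1} + p_{2k} + p_{2m})`. -/
theorem adjacent_pair_basis_second (V : Type*) [AddCommGroup V] [Module ℝ V]
    (Q : QuadraticForm ℝ V) (i m : ℕ) (hi : 2 ≤ i) (him : i < m)
    (p : ℕ → V) (hnull : ∀ a ∈ Finset.Icc 3 (2 * m), Q (p a) = 0) :
    Q (∑ a ∈ Finset.Icc (2 * i - 1) (2 * m - 1), p a)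
      = -Q (∑ a ∈ Finset.Icc 3 (2 * i), p a) + Q (∑ a ∈ Finset.Icc 3 (2 * m), p a)
        + 2 * Q (p (2 * i - 1) + p (2 * i))
        + (2 * (i : ℝ) - 5) * Q (p (2 * m - 1) + p (2 * m))
        + (2 * (i : ℝ) - 3) * ∑ k ∈ Finset.Icc (i + 1) (m - 1),
            Q (p (2 * k - 1) + p (2 * k))
        - ∑ j ∈ Finset.Icc 3 (2 * i - 2), ∑ k ∈ Finset.Icc (i + 1) m,
            Q (p j + p (2 * k - 1) + p (2 * k))
        - ∑ k ∈ Finset.Icc i (m - 1), Q (p (2 * k - 1) + p (2 * k) + p (2 * m)) := by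
  classical
  have hadd : ∀ x y : V, Q (x + y) = Q x + Q y + polar Q x y := by
    intro x y; rw [QuadraticMap.polar]; ring
  have hn : ∀ a, 3 ≤ a → a ≤ 2*m → Q (p a) = 0 := fun a h1 h2 =>
    hnull a (Finset.mem_Icc.mpr ⟨h1, h2⟩)
  have hd : ∀ a, 3 ≤ a → a ≤ 2*m → polar Q (p a) (p a) = 0 := by
    intro a h1 h2; rw [QuadraticMap.polar_self, hn a h1 h2]; simp
  have hpair : ∀ x y, 3 ≤ x → x ≤ 2*m → 3 ≤ y → y ≤ 2*m →
      Q (p x + p y) = polar Q (p x) (p y) := by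
    intro x y h1 h2 h3 h4; rw [hadd, hn x h1 h2, hn y h3 h4]; ring
  have htrip : ∀ x y z, 3 ≤ x → x ≤ 2*m → 3 ≤ y → y ≤ 2*m → 3 ≤ z → z ≤ 2*m →
      Q (p x + p y + p z)
        = polar Q (p x) (p y) + polar Q (p x) (p z) + polar Q (p y) (p z) := by
    intro x y z h1 h2 h3 h4 h5 h6
    rw [hadd, hpair x y h1 h2 h3 h4, QuadraticMap.polar_add_left, hn z h5 h6]; ring
  -- split Icc 3 (2m) = L ∪ R
  have h3 : Q (∑ a ∈ Finset.Icc 3 (2*m), p a)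
      = Q (∑ a ∈ Finset.Icc 3 (2*i-2), p a) + Q (∑ a ∈ Finset.Icc (2*i-1) (2*m), p a)
        + ∑ a ∈ Finset.Icc 3 (2*i-2), ∑ b ∈ Finset.Icc (2*i-1) (2*m),
            polar Q (p a) (p b) := by
    rw [show Finset.Icc 3 (2*m) = Finset.Icc 3 (2*i-2) ∪ Finset.Icc (2*i-1) (2*m) from by
        ext a; simp; omega,
      Finset.sum_union (by rw [Finset.disjoint_left]; intro a ha hb; simp at ha hb; omega),
      hadd, polar_sum_left']
    simp_rw [polar_sum_right']
  -- split Icc 3 (2i) = L ∪ {2i-1, 2i}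
  have h2 : Q (∑ a ∈ Finset.Icc 3 (2*i), p a)
      = Q (∑ a ∈ Finset.Icc 3 (2*i-2), p a) + polar Q (p (2*i-1)) (p (2*i))
        + ∑ a ∈ Finset.Icc 3 (2*i-2),
            (polar Q (p a) (p (2*i-1)) + polar Q (p a) (p (2*i))) := by
    rw [show Finset.Icc 3 (2*i) = Finset.Icc 3 (2*i-2) ∪ {2*i-1, 2*i} from by
        ext a; simp; omega,
      Finset.sum_union (by rw [Finset.disjoint_left]; intro a ha hb; simp at ha hb; omega),
      Finset.sum_pair (by omega), hadd,
      hpair (2*i-1) (2*i) (by omega) (by omega) (by omega) (by omega), polar_sum_left']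
    simp_rw [QuadraticMap.polar_add_right]
  -- split R = s₁ ∪ {2m}
  have hR : Q (∑ a ∈ Finset.Icc (2*i-1) (2*m), p a)
      = Q (∑ a ∈ Finset.Icc (2*i-1) (2*m-1), p a)
        + ∑ a ∈ Finset.Icc (2*i-1) (2*m-1), polar Q (p a) (p (2*m)) := by
    rw [show Finset.Icc (2*i-1) (2*m) = Finset.Icc (2*i-1) (2*m-1) ∪ {2*m} from by
        ext a; simp; omega,
      Finset.sum_union (by rw [Finset.disjoint_left]; intro a ha hb; simp at ha hb; omega),
      Finset.sum_singleton, hadd, hn (2*m) (by omega) le_rfl, polar_sum_left']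
    ring
  -- C reindexed in pairs
  have hC : ∑ a ∈ Finset.Icc 3 (2*i-2), ∑ b ∈ Finset.Icc (2*i-1) (2*m), polar Q (p a) (p b)
      = ∑ a ∈ Finset.Icc 3 (2*i-2), ∑ k ∈ Finset.Icc i m,
          (polar Q (p a) (p (2*k-1)) + polar Q (p a) (p (2*k))) :=
    Finset.sum_congr rfl fun a _ => pairSum _ i (by omega) m him.le
  -- U reindexed in pairs
  have hU : ∑ a ∈ Finset.Icc (2*i-1) (2*m-1), polar Q (p a) (p (2*m))
      = ∑ k ∈ Finset.Icc i m,
          (polar Q (p (2*k-1)) (p (2*m)) + polar Q (p (2*k)) (p (2*m))) := by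
    rw [← pairSum (fun a => polar Q (p a) (p (2*m))) i (by omega) m him.le,
      show Finset.Icc (2*i-1) (2*m) = Finset.Icc (2*i-1) (2*m-1) ∪ {2*m} from by
        ext a; simp; omega,
      Finset.sum_union (by rw [Finset.disjoint_left]; intro a ha hb; simp at ha hb; omega),
      Finset.sum_singleton, hd (2*m) (by omega) le_rfl, add_zero]
  -- rewrite small Q's in sums
  have hW : ∑ k ∈ Finset.Icc (i+1) (m-1), Q (p (2*k-1) + p (2*k))
      = ∑ k ∈ Finset.Icc (i+1) (m-1), polar Q (p (2*k-1)) (p (2*k)) :=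
    Finset.sum_congr rfl fun k hk => by
      simp only [Finset.mem_Icc] at hk
      exact hpair _ _ (by omega) (by omega) (by omega) (by omega)
  have hDq : ∑ j ∈ Finset.Icc 3 (2*i-2), ∑ k ∈ Finset.Icc (i+1) m,
        Q (p j + p (2*k-1) + p (2*k))
      = ∑ j ∈ Finset.Icc 3 (2*i-2), ∑ k ∈ Finset.Icc (i+1) m,
          (polar Q (p j) (p (2*k-1)) + polar Q (p j) (p (2*k))
            + polar Q (p (2*k-1)) (p (2*k))) :=
    Finset.sum_congr rfl fun j hj => Finset.sum_congr rfl fun k hk => by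
      simp only [Finset.mem_Icc] at hj hk
      exact htrip _ _ _ (by omega) (by omega) (by omega) (by omega) (by omega) (by omega)
  have hEq : ∑ k ∈ Finset.Icc i (m-1), Q (p (2*k-1) + p (2*k) + p (2*m))
      = ∑ k ∈ Finset.Icc i (m-1),
          (polar Q (p (2*k-1)) (p (2*k)) + polar Q (p (2*k-1)) (p (2*m))
            + polar Q (p (2*k)) (p (2*m))) :=
    Finset.sum_congr rfl fun k hk => by
      simp only [Finset.mem_Icc] at hk
      exact htrip _ _ _ (by omega) (by omega) (by omega) (by omega) (by omega) (by omega)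
  -- splitting lemmas
  have hCsplit : ∀ g : ℕ → ℝ, ∑ k ∈ Finset.Icc i m, g k = g i + ∑ k ∈ Finset.Icc (i+1) m, g k := by
    intro g
    rw [show Finset.Icc i m = insert i (Finset.Icc (i+1) m) from by ext a; simp; omega,
      Finset.sum_insert (by simp)]
  have hMsplit : ∀ g : ℕ → ℝ, ∑ k ∈ Finset.Icc (i+1) m, g k
      = g m + ∑ k ∈ Finset.Icc (i+1) (m-1), g k := by
    intro g
    rw [show Finset.Icc (i+1) m = insert m (Finset.Icc (i+1) (m-1)) from by ext a; simp; omega,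
      Finset.sum_insert (by simp; omega)]
  have hEsplit : ∀ g : ℕ → ℝ, ∑ k ∈ Finset.Icc i (m-1), g k
      = g i + ∑ k ∈ Finset.Icc (i+1) (m-1), g k := by
    intro g
    rw [show Finset.Icc i (m-1) = insert i (Finset.Icc (i+1) (m-1)) from by ext a; simp; omega,
      Finset.sum_insert (by simp)]
  have hcard : (((Finset.Icc 3 (2*i-2)).card : ℕ) : ℝ) = 2*(i:ℝ) - 4 := by
    rw [Nat.card_Icc, show 2*i-2+1-3 = 2*i-4 from by omega, Nat.cast_sub (by omega)]
    push_cast; ring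
  rw [h3, h2, hR, hC, hU,
    hpair (2*i-1) (2*i) (by omega) (by omega) (by omega) (by omega),
    hpair (2*m-1) (2*m) (by omega) (by omega) (by omega) (by omega),
    hW, hDq, hEq]
  simp only [hCsplit, hMsplit, hEsplit, Finset.sum_add_distrib, Finset.sum_const,
    nsmul_eq_mul]
  rw [hcard, hd (2*m) (by omega) le_rfl]
  ring
end

section
/- Eight-point open-associahedron recursion identity for A₈[(1,2),(3,4),(5,(6,7),8)]: for all nonzero real numbers X₁₃, X₁₄, X₁₅, X₁₆, X₂₅, X₃₅, X₃₆, X₃₈, X₅₈, X₆₈ with X₃₅ − X₂₅ ≠ 0, X₃₅ − X₃₈ ≠ 0, X₃₆ − 2X₃₈ ≠ 0, X₃₅ − X₃₆/2 ≠ 0, and X₃₈ − X₃₆/2 ≠ 0, one has (1/X₂₅ − 1/X₃₅)·(1/(X₁₅·X₆₈))·(1/X₁₆ + 1/X₅₈)·(1/(X₃₅ − X₂₅)) + (1/X₃₈ − 1/X₃₅)·(1/(X₁₃·(X₃₅ − X₃₈)·X₆₈))·(1/X₅₈ + 1/(X₃₆ − 2X₃₈)) + (1/X₃₆ − 1/(2X₃₅))·(1/((X₃₅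 − X₃₆/2)·X₁₃·X₆₈))·(1/(X₃₈ − X₃₆/2) + 1/X₁₆) + (1/X₁₄ + 1/X₃₅)·(1/(X₁₃·X₆₈·X₁₅))·(1/X₅₈ + 1/X₁₆) = 1/(X₁₃X₁₄X₁₅X₁₆X₆₈) + 1/(X₁₃X₁₅X₁₆X₃₅X₆₈) + 1/(X₁₅X₁₆X₂₅X₃₅X₆₈) + 1/(X₁₃X₁₆X₃₅X₃₆X₆₈) + 1/(X₁₃X₃₅X₃₆X₃₈X₆₈) + 1/(X₁₃X₁₄X₁₅X₅₈X₆₈) + 1/(X₁₃X₁₅X₃₅X₅₈X₆₈) + 1/(X₁₅X₂₅X₃₅X₅₈X₆₈) + 1/(X₁₃X₃₅X₃₈X₅₈X₆₈), i.e. the recursion with shift X₃₅ → zX₃₅, deformed channels F = {X₂₅, X₃₈, X₃₆, X₁₄} and prefactors λ = {1, 1, 2, −1} reproduces the nine flavor-allowed planar Feynman diagrams. -/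
set_option maxHeartbeats 4000000 in
/-- Eight-point open-associahedron recursion identity for
`A₈[(1,2),(3,4),(5,(6,7),8)]`: the recursion with shift `X₃₅ → zX₃₅`, deformed
channels `F = {X₂₅, X₃₈, X₃₆, X₁₄}` and prefactors `λ = {1, 1, 2, −1}` reproduces
the nine flavor-allowed planar Feynman diagrams. -/
theorem eight_point_recursion (X13 X14 X15 X16 X25 X35 X36 X38 X58 X68 : ℝ)
    (h13 : X13 ≠ 0) (h14 : X14 ≠ 0) (h15 : X15 ≠ 0) (h16 : X16 ≠ 0)
    (h25 : X25 ≠ 0) (h35 : X35 ≠ 0) (h36 : X36 ≠ 0) (h38 : X38 ≠ 0)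
    (h58 : X58 ≠ 0) (h68 : X68 ≠ 0)
    (hsp1 : X35 - X25 ≠ 0) (hsp2 : X35 - X38 ≠ 0) (hsp3 : X36 - 2 * X38 ≠ 0)
    (hsp4 : X35 - X36 / 2 ≠ 0) (hsp5 : X38 - X36 / 2 ≠ 0) :
    (1 / X25 - 1 / X35) * (1 / (X15 * X68)) * (1 / X16 + 1 / X58) * (1 / (X35 - X25))
      + (1 / X38 - 1 / X35) * (1 / (X13 * (X35 - X38) * X68))
          * (1 / X58 + 1 / (X36 - 2 * X38))
      + (1 / X36 - 1 / (2 * X35)) * (1 / ((X35 - X36 / 2) * X13 * X68))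
          * (1 / (X38 - X36 / 2) + 1 / X16)
      + (1 / X14 + 1 / X35) * (1 / (X13 * X68 * X15)) * (1 / X58 + 1 / X16)
      = 1 / (X13 * X14 * X15 * X16 * X68) + 1 / (X13 * X15 * X16 * X35 * X68)
        + 1 / (X15 * X16 * X25 * X35 * X68) + 1 / (X13 * X16 * X35 * X36 * X68)
        + 1 / (X13 * X35 * X36 * X38 * X68) + 1 / (X13 * X14 * X15 * X58 * X68)
        + 1 / (X13 * X15 * X35 * X58 * X68) + 1 / (X15 * X25 * X35 * X58 * X68)
        + 1 / (X13 * X35 * X38 * X58 * X68) := by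
  have hsp4' : 2 * X35 - X36 ≠ 0 := by intro h; apply hsp4; linarith
  have hsp5' : 2 * X38 - X36 ≠ 0 := by intro h; apply hsp5; linarith
  have h1 : (1 / X25 - 1 / X35) * (1 / (X15 * X68)) * (1 / X16 + 1 / X58)
      * (1 / (X35 - X25))
      = 1 / (X15 * X16 * X25 * X35 * X68) + 1 / (X15 * X25 * X35 * X58 * X68) := by
    field_simp
  have h2 : (1 / X38 - 1 / X35) * (1 / (X13 * (X35 - X38) * X68))
      * (1 / X58 + 1 / (X36 - 2 * X38))
      = 1 / (X13 * X35 * X38 * X58 * X68)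
        + 1 / (X13 * X35 * X38 * (X36 - 2 * X38) * X68) := by
    field_simp
  have h3 : (1 / X36 - 1 / (2 * X35)) * (1 / ((X35 - X36 / 2) * X13 * X68))
      * (1 / (X38 - X36 / 2) + 1 / X16)
      = 1 / (X13 * X16 * X35 * X36 * X68)
        + 1 / (X13 * X35 * X36 * (X38 - X36 / 2) * X68) := by
    rw [show X35 - X36 / 2 = (2 * X35 - X36) / 2 from by ring,
        show X38 - X36 / 2 = (2 * X38 - X36) / 2 from by ring]
    field_simp
    ring
  have h4 : (1 / X14 + 1 / X35) * (1 / (X13 * X68 * X15)) * (1 / X58 + 1 / X16)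
      = 1 / (X13 * X14 * X15 * X16 * X68) + 1 / (X13 * X15 * X16 * X35 * X68)
        + 1 / (X13 * X14 * X15 * X58 * X68) + 1 / (X13 * X15 * X35 * X58 * X68) := by
    field_simp
    ring
  have h5 : 1 / (X13 * X35 * X38 * (X36 - 2 * X38) * X68)
      + 1 / (X13 * X35 * X36 * (X38 - X36 / 2) * X68)
      = 1 / (X13 * X35 * X36 * X38 * X68) := by
    rw [show X38 - X36 / 2 = (2 * X38 - X36) / 2 from by ring]
    field_simp
    rw [show X38 * 2 - X36 = -(X36 - X38 * 2) by ring, div_neg, ← sub_eq_add_neg,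
      div_sub_div_same]
    exact div_self (by intro h; apply hsp3; linarith)
  rw [h1, h2, h3, h4]
  linarith [h5]
end
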